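/- Let {ψ_m}_{m ∈ ℤ², |m|_∞ ≤ a} be an orthonormal family in L²(ℝ²) such that for some δ > 0 and constant C₀, ∫ (1 + |x₁ − m₁| + |x₂ − m₂|)^{2(1+δ)} |ψ_m(x)|² dx ≤ C₀ for every m. Let P_a := Σ_{|m|_∞ ≤ a} |ψ_m⟩⟨ψ_m| and let χ_{a+b} be multiplication by the indicator of [−(a+b), a+b)². Then for all a, b ≥ 1, ‖(1 − χ_{a+b}) P_a‖²_{HS} ≤ C a² b^{−2(1+δ)} for a constant C depending only on C₀ and δ. -/

import Mathlib

open MeasureTheory Real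
open scoped ENNReal NNReal

noncomputable section

abbrev Plane := EuclideanSpace ℝ (Fin 2)
abbrev H2 := Lp ℂ 2 (volume : Measure Plane)

/-- The square `[-c, c)²` in the plane. -/
def box (c : ℝ) : Set Plane := {x | x 0 ∈ Set.Ico (-c) c ∧ x 1 ∈ Set.Ico (-c) c}

/-- near-boundary estimate.  For a (1+δ)-localized orthonormal family
{ψ_m}, the Hilbert–Schmidt norm
‖(1 − χ_{a+b}) P_a‖²_{HS} = Σ_{|m|_∞ ≤ a} ‖(1 − χ_{a+b}) ψ_m‖² ≤ C a² b^{−2(1+δ)}. -/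
theorem stmt3 (δ C₀ : ℝ) (hδ : 0 < δ) :
    ∃ C : ℝ, ∀ (ψ : ℤ × ℤ → H2), Orthonormal ℂ ψ →
      (∀ m : ℤ × ℤ, ∫⁻ x, ENNReal.ofReal
          ((1 + |x 0 - (m.1 : ℝ)| + |x 1 - (m.2 : ℝ)|) ^ (2 * (1 + δ))
            * ‖(ψ m : Plane → ℂ) x‖ ^ 2) ≤ ENNReal.ofReal C₀) →
      ∀ a b : ℝ, 1 ≤ a → 1 ≤ b →
        (∑' m : ℤ × ℤ,
            if (|m.1| : ℝ) ≤ a ∧ (|m.2| : ℝ) ≤ a then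
              ∫⁻ x in (box (a + b))ᶜ, ENNReal.ofReal (‖(ψ m : Plane → ℂ) x‖ ^ 2)
            else 0)
          ≤ ENNReal.ofReal (C * a ^ 2 * b ^ (-(2 * (1 + δ)))) := by
  classical
  refine ⟨9 * max C₀ 0, ?_⟩
  intro ψ _hortho hloc a b ha hb
  set p : ℝ := 2 * (1 + δ) with hpdef
  have hp0 : 0 < p := by rw [hpdef]; linarith
  set C' : ℝ := max C₀ 0 with hC'def
  have hC'0 : 0 ≤ C' := le_max_right _ _
  have hb0 : (0:ℝ) < b := lt_of_lt_of_le one_pos hb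
  have ha0 : (0:ℝ) < a := lt_of_lt_of_le one_pos ha
  have hbn0 : (0:ℝ) ≤ b ^ (-p) := Real.rpow_nonneg hb0.le _
  set B : ℝ≥0∞ := ENNReal.ofReal (b ^ (-p)) * ENNReal.ofReal C' with hBdef
  have hboxm : MeasurableSet (box (a + b)) := by
    have : box (a + b) = ((fun x : Plane => x 0) ⁻¹' Set.Ico (-(a+b)) (a+b)) ∩
        ((fun x : Plane => x 1) ⁻¹' Set.Ico (-(a+b)) (a+b)) := rfl
    rw [this]
    exact (((EuclideanSpace.proj (0 : Fin 2) : Plane →L[ℝ] ℝ).continuous.measurable) measurableSet_Ico).inter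
      (((EuclideanSpace.proj (1 : Fin 2) : Plane →L[ℝ] ℝ).continuous.measurable) measurableSet_Ico)
  -- key per-m bound
  have key : ∀ m : ℤ × ℤ, (|m.1| : ℝ) ≤ a → (|m.2| : ℝ) ≤ a →
      ∫⁻ x in (box (a + b))ᶜ, ENNReal.ofReal (‖(ψ m : Plane → ℂ) x‖ ^ 2) ≤ B := by
    intro m hm1 hm2
    have hpt : ∀ x ∈ (box (a + b))ᶜ,
        ENNReal.ofReal (‖(ψ m : Plane → ℂ) x‖ ^ 2) ≤
        ENNReal.ofReal (b ^ (-p)) * ENNReal.ofReal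
          ((1 + |x 0 - (m.1 : ℝ)| + |x 1 - (m.2 : ℝ)|) ^ p * ‖(ψ m : Plane → ℂ) x‖ ^ 2) := by
      intro x hx
      set w : ℝ := 1 + |x 0 - (m.1 : ℝ)| + |x 1 - (m.2 : ℝ)| with hwdef
      have hbw : b ≤ w := by
        simp only [Set.mem_compl_iff, box, Set.mem_setOf_eq, Set.mem_Ico, not_and_or,
          not_and, not_le, not_lt] at hx
        have h1' := abs_le.mp hm1
        have h2' := abs_le.mp hm2
        have ha1 := abs_nonneg (x 0 - (m.1:ℝ))
        have ha2 := abs_nonneg (x 1 - (m.2:ℝ))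
        rcases hx with (h | h) | (h | h)
        · have hd : b ≤ |x 0 - (m.1:ℝ)| := by
            rw [abs_sub_comm]
            calc b ≤ ((m.1:ℝ)) - x 0 := by linarith [h1'.1]
              _ ≤ |(m.1:ℝ) - x 0| := le_abs_self _
          rw [hwdef]; linarith
        · have hd : b ≤ |x 0 - (m.1:ℝ)| := by
            calc b ≤ x 0 - (m.1:ℝ) := by linarith [h1'.2]
              _ ≤ |x 0 - (m.1:ℝ)| := le_abs_self _
          rw [hwdef]; linarith
        · have hd : b ≤ |x 1 - (m.2:ℝ)| := by
            rw [abs_sub_comm]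
            calc b ≤ ((m.2:ℝ)) - x 1 := by linarith [h2'.1]
              _ ≤ |(m.2:ℝ) - x 1| := le_abs_self _
          rw [hwdef]; linarith
        · have hd : b ≤ |x 1 - (m.2:ℝ)| := by
            calc b ≤ x 1 - (m.2:ℝ) := by linarith [h2'.2]
              _ ≤ |x 1 - (m.2:ℝ)| := le_abs_self _
          rw [hwdef]; linarith
      have hwp : b ^ p ≤ w ^ p := Real.rpow_le_rpow hb0.le hbw hp0.le
      have hbp : (0:ℝ) < b ^ p := Real.rpow_pos_of_pos hb0 _
      have hone : (1:ℝ) ≤ b ^ (-p) * w ^ p := by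
        rw [Real.rpow_neg hb0.le, inv_mul_eq_div, le_div_iff₀ hbp, one_mul]
        exact hwp
      rw [← ENNReal.ofReal_mul hbn0]
      apply ENNReal.ofReal_le_ofReal
      have hn : (0:ℝ) ≤ ‖(ψ m : Plane → ℂ) x‖ ^ 2 := sq_nonneg _
      calc ‖(ψ m : Plane → ℂ) x‖ ^ 2 = 1 * ‖(ψ m : Plane → ℂ) x‖ ^ 2 := (one_mul _).symm
        _ ≤ (b ^ (-p) * w ^ p) * ‖(ψ m : Plane → ℂ) x‖ ^ 2 :=
            mul_le_mul_of_nonneg_right hone hn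
        _ = b ^ (-p) * (w ^ p * ‖(ψ m : Plane → ℂ) x‖ ^ 2) := mul_assoc _ _ _
    calc ∫⁻ x in (box (a + b))ᶜ, ENNReal.ofReal (‖(ψ m : Plane → ℂ) x‖ ^ 2)
        ≤ ∫⁻ x in (box (a + b))ᶜ, ENNReal.ofReal (b ^ (-p)) * ENNReal.ofReal
            ((1 + |x 0 - (m.1 : ℝ)| + |x 1 - (m.2 : ℝ)|) ^ p * ‖(ψ m : Plane → ℂ) x‖ ^ 2) :=
          setLIntegral_mono' hboxm.compl hpt
      _ ≤ ∫⁻ x, ENNReal.ofReal (b ^ (-p)) * ENNReal.ofReal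
            ((1 + |x 0 - (m.1 : ℝ)| + |x 1 - (m.2 : ℝ)|) ^ p * ‖(ψ m : Plane → ℂ) x‖ ^ 2) :=
          setLIntegral_le_lintegral _ _
      _ = ENNReal.ofReal (b ^ (-p)) * ∫⁻ x, ENNReal.ofReal
            ((1 + |x 0 - (m.1 : ℝ)| + |x 1 - (m.2 : ℝ)|) ^ p * ‖(ψ m : Plane → ℂ) x‖ ^ 2) :=
          lintegral_const_mul' _ _ ENNReal.ofReal_ne_top
      _ ≤ ENNReal.ofReal (b ^ (-p)) * ENNReal.ofReal C₀ := mul_le_mul_right (hloc m) _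
      _ ≤ B := mul_le_mul_right (ENNReal.ofReal_le_ofReal (le_max_left _ _)) _
  -- counting
  set n : ℤ := ⌊a⌋ with hndef
  have hn1 : 1 ≤ n := by
    rw [hndef]; exact_mod_cast Int.le_floor.mpr (by exact_mod_cast ha)
  set S : Finset (ℤ × ℤ) := Finset.Icc (-n) n ×ˢ Finset.Icc (-n) n with hSdef
  have hzero : ∀ m ∉ S, (if (|m.1| : ℝ) ≤ a ∧ (|m.2| : ℝ) ≤ a then
      ∫⁻ x in (box (a + b))ᶜ, ENNReal.ofReal (‖(ψ m : Plane → ℂ) x‖ ^ 2) else 0) = 0 := by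
    intro m hm
    rw [if_neg]
    intro ⟨h1, h2⟩
    apply hm
    rw [hSdef, Finset.mem_product, Finset.mem_Icc, Finset.mem_Icc]
    have h1' := abs_le.mp h1
    have h2' := abs_le.mp h2
    refine ⟨⟨?_, Int.le_floor.mpr h1'.2⟩, ?_, Int.le_floor.mpr h2'.2⟩
    · have : -m.1 ≤ n := Int.le_floor.mpr (by push_cast; linarith [h1'.1])
      linarith
    · have : -m.2 ≤ n := Int.le_floor.mpr (by push_cast; linarith [h2'.1])
      linarith
  rw [tsum_eq_sum hzero]
  have hsum : ∑ m ∈ S, (if (|m.1| : ℝ) ≤ a ∧ (|m.2| : ℝ) ≤ a then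
      ∫⁻ x in (box (a + b))ᶜ, ENNReal.ofReal (‖(ψ m : Plane → ℂ) x‖ ^ 2) else 0) ≤
      S.card • B := by
    apply Finset.sum_le_card_nsmul
    intro m _
    split_ifs with h
    · exact key m h.1 h.2
    · exact zero_le
  refine hsum.trans ?_
  -- card bound
  have hcard : (S.card : ℝ) ≤ 9 * a ^ 2 := by
    have : S.card = (Finset.Icc (-n) n).card * (Finset.Icc (-n) n).card := by
      rw [hSdef, Finset.card_product]
    rw [this]
    have hc : (Finset.Icc (-n) n).card = (2 * n + 1).toNat := by
      rw [Int.card_Icc]; congr 1; ring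
    rw [hc]
    have hna : (n : ℝ) ≤ a := Int.floor_le a
    have hn1' : (1:ℝ) ≤ (n:ℝ) := by exact_mod_cast hn1
    have h3 : ((2 * n + 1).toNat : ℝ) ≤ 3 * a := by
      have heq : (((2 * n + 1).toNat : ℤ) : ℝ) = ((2 * n + 1 : ℤ) : ℝ) := by
        rw [Int.toNat_of_nonneg (by linarith)]
      rw [← Int.cast_natCast, heq]
      push_cast
      linarith
    have h30 : (0:ℝ) ≤ ((2 * n + 1).toNat : ℝ) := Nat.cast_nonneg _
    push_cast
    nlinarith
  have hBle : S.card • B ≤ ENNReal.ofReal ((S.card : ℝ)) * B := by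
    rw [nsmul_eq_mul]
    rw [ENNReal.ofReal_natCast]
  refine (hBle.trans ?_)
  rw [hBdef, ← mul_assoc, ← ENNReal.ofReal_mul (Nat.cast_nonneg _), ← ENNReal.ofReal_mul (by positivity)]
  apply ENNReal.ofReal_le_ofReal
  have : (9 * C' * a ^ 2 * b ^ (-p)) = (9 * a ^ 2) * b ^ (-p) * C' := by ring
  rw [this]
  have hmul : (S.card : ℝ) * b ^ (-p) ≤ (9 * a ^ 2) * b ^ (-p) :=
    mul_le_mul_of_nonneg_right hcard hbn0
  exact mul_le_mul_of_nonneg_right hmul hC'0
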